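/- For any integer r ≥ 2 (more generally real r > 1) and integer 1 ≤ k < r, the function x ↦ −(x^k − 1)/(x^r − 1) is strictly increasing on (0, ∞) (extended continuously at x = 1 by value −k/r). -/

import Mathlib

open Real Set Filter Topology

/-- Key inequality from strict convexity of `exp`. -/
lemma key_ineq_aux (r : ℝ) (hr : 1 < r) (a : ℝ) (ha : 1 ≤ a) (har : a < r)
    (x : ℝ) (hx : 0 < x) (hx1 : x ≠ 1) :
    r * x ^ (r - a) < (r - a) * x ^ r + a := by
  have hr0 : (0 : ℝ) < r := lt_trans one_pos hr
  have ha0 : (0 : ℝ) < a := lt_of_lt_of_le one_pos ha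
  have hu : (0 : ℝ) < r - a := by linarith
  have hL : Real.log x ≠ 0 := Real.log_ne_zero_of_pos_of_ne_one hx hx1
  have hne : r * Real.log x ≠ (0 : ℝ) := mul_ne_zero (ne_of_gt hr0) hL
  have conv := strictConvexOn_exp.2 (Set.mem_univ (r * Real.log x)) (Set.mem_univ 0)
      hne (div_pos hu hr0) (div_pos ha0 hr0) (by field_simp; ring)
  have h1 : ((r - a) / r) • (r * Real.log x) + (a / r) • (0 : ℝ) = (r - a) * Real.log x := by
    rw [smul_eq_mul, smul_eq_mul]
    field_simp
    ring
  have h2 : Real.exp ((r - a) * Real.log x) = x ^ (r - a) := by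
    rw [Real.rpow_def_of_pos hx]; ring_nf
  have h3 : Real.exp (r * Real.log x) = x ^ r := by
    rw [Real.rpow_def_of_pos hx]; ring_nf
  rw [h1, h2] at conv
  rw [h3, Real.exp_zero] at conv
  -- conv : x ^ (r - a) < (r - a)/r • x ^ r + a/r • 1
  rw [smul_eq_mul, smul_eq_mul] at conv
  have := (mul_lt_mul_iff_right₀ hr0).2 conv
  calc r * x ^ (r - a) < r * ((r - a) / r * x ^ r + a / r * 1) := this
    _ = (r - a) * x ^ r + a := by field_simp

lemma key_ineq (r : ℝ) (hr : 1 < r) (a : ℝ) (ha : 1 ≤ a) (har : a < r)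
    (x : ℝ) (hx : 0 < x) (hx1 : x ≠ 1) :
    a * x ^ (a - 1) * (x ^ r - 1) < r * x ^ (r - 1) * (x ^ a - 1) := by
  have hA : (0 : ℝ) < x ^ a := Real.rpow_pos_of_pos hx a
  have hR : (0 : ℝ) < x ^ r := Real.rpow_pos_of_pos hx r
  have hU : (0 : ℝ) < x ^ (r - a) := Real.rpow_pos_of_pos hx _
  have hUA : x ^ (r - a) * x ^ a = x ^ r := by
    rw [← Real.rpow_add hx]; ring_nf
  have hkey := key_ineq_aux r hr a ha har x hx hx1
  -- multiply key by x^a : r * x^r < (r-a) * x^r * x^a + a * x^a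
  have h2 : r * x ^ r < (r - a) * (x ^ r * x ^ a) + a * x ^ a := by
    have := (mul_lt_mul_of_pos_right hkey hA)
    calc r * x ^ r = r * x ^ (r - a) * x ^ a := by rw [mul_assoc, hUA]
      _ < ((r - a) * x ^ r + a) * x ^ a := this
      _ = (r - a) * (x ^ r * x ^ a) + a * x ^ a := by ring
  have hxa1 : x ^ (a - 1) = x ^ a / x := by
    rw [Real.rpow_sub hx, Real.rpow_one]
  have hxr1 : x ^ (r - 1) = x ^ r / x := by
    rw [Real.rpow_sub hx, Real.rpow_one]
  have hgoal : a * x ^ a * (x ^ r - 1) < r * x ^ r * (x ^ a - 1) := by nlinarith [h2]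
  have e1 : a * x ^ (a - 1) * (x ^ r - 1) = (a * x ^ a * (x ^ r - 1)) / x := by
    rw [hxa1]; ring
  have e2 : r * x ^ (r - 1) * (x ^ a - 1) = (r * x ^ r * (x ^ a - 1)) / x := by
    rw [hxr1]; ring
  rw [e1, e2]
  exact (div_lt_div_iff_of_pos_right hx).2 hgoal

theorem neg_ratio_strictMono (r : ℝ) (hr : 1 < r) (k : ℕ) (hk : 1 ≤ k)
    (hkr : (k : ℝ) < r) :
    StrictMonoOn
      (fun x : ℝ => if x = 1 then -(k : ℝ)/r else -(x^k - 1)/(x^(r : ℝ) - 1))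
      (Set.Ioi 0) := by
  set g : ℝ → ℝ := fun x : ℝ => if x = 1 then -(k : ℝ)/r else -(x^k - 1)/(x^(r : ℝ) - 1)
    with hg
  have hr0 : (0 : ℝ) < r := lt_trans one_pos hr
  have ha1 : (1 : ℝ) ≤ (k : ℝ) := by exact_mod_cast hk
  -- denominator nonzero off 1
  have hden : ∀ x : ℝ, 0 < x → x ≠ 1 → x ^ (r : ℝ) - 1 ≠ 0 := by
    intro x hx hx1
    rcases lt_or_gt_of_ne hx1 with h | h
    · have : x ^ (r : ℝ) < 1 := Real.rpow_lt_one hx.le h hr0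
      linarith
    · have : 1 < x ^ (r : ℝ) := Real.one_lt_rpow_iff_of_pos hx |>.2 (Or.inl ⟨h, hr0⟩)
      linarith
  -- continuity at points ≠ 1
  have hcont_ne : ∀ x : ℝ, 0 < x → x ≠ 1 → ContinuousAt g x := by
    intro x hx hx1
    have hEq : g =ᶠ[𝓝 x] fun y => -(y ^ k - 1) / (y ^ (r : ℝ) - 1) := by
      filter_upwards [isOpen_ne.mem_nhds hx1] with y hy
      simp [hg, hy]
    rw [continuousAt_congr hEq]
    apply ContinuousAt.div
    · fun_prop
    · exact (Real.continuousAt_rpow_const x r (Or.inl hx.ne')).sub continuousAt_const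
    · exact hden x hx hx1
  -- continuity at 1
  have hcont_one : ContinuousAt g 1 := by
    have hk' : HasDerivAt (fun y : ℝ => y ^ k) (k : ℝ) 1 := by
      simpa using hasDerivAt_pow k (1 : ℝ)
    have hr' : HasDerivAt (fun y : ℝ => y ^ (r : ℝ)) r 1 := by
      simpa using Real.hasDerivAt_rpow_const (x := (1:ℝ)) (p := r) (Or.inr hr.le)
    have tk := hasDerivAt_iff_tendsto_slope.1 hk'
    have tr := hasDerivAt_iff_tendsto_slope.1 hr'
    have tdiv : Tendsto (fun y => -(slope (fun z : ℝ => z ^ k) 1 y) /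
        slope (fun z : ℝ => z ^ (r : ℝ)) 1 y) (𝓝[≠] (1:ℝ)) (𝓝 (-(k : ℝ) / r)) :=
      (tk.neg.div tr hr0.ne')
    have hEq : (fun y => -(slope (fun z : ℝ => z ^ k) 1 y) /
        slope (fun z : ℝ => z ^ (r : ℝ)) 1 y) =ᶠ[𝓝[≠] (1:ℝ)] g := by
      have hpos : Set.Ioi (0:ℝ) ∈ 𝓝[≠] (1:ℝ) :=
        nhdsWithin_le_nhds (isOpen_Ioi.mem_nhds (by norm_num))
      filter_upwards [hpos, self_mem_nhdsWithin] with y hy hy1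
      have hy1' : y ≠ 1 := hy1
      have hs : y - 1 ≠ 0 := sub_ne_zero.2 hy1'
      have hd := hden y hy hy1'
      simp only [slope_def_field, hg, hy1', if_false, one_pow, Real.one_rpow]
      field_simp
    have : Tendsto g (𝓝[≠] (1:ℝ)) (𝓝 (-(k:ℝ)/r)) := tdiv.congr' hEq
    have hg1' : g 1 = -(k:ℝ)/r := by simp [hg]
    have hpure : Tendsto g (pure (1:ℝ)) (𝓝 (-(k:ℝ)/r)) := by
      rw [← hg1']
      exact tendsto_pure_nhds g 1
    have := this.sup hpure
    rw [nhdsNE_sup_pure] at this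
    have hg1 : g 1 = -(k:ℝ)/r := by simp [hg]
    rw [ContinuousAt, hg1]
    exact this
  have hcont : ∀ x : ℝ, 0 < x → ContinuousAt g x := by
    intro x hx
    by_cases h1 : x = 1
    · rw [h1]; exact hcont_one
    · exact hcont_ne x hx h1
  -- derivative positivity off 1
  have hderiv : ∀ x : ℝ, 0 < x → x ≠ 1 → 0 < deriv g x := by
    intro x hx hx1
    have hd := hden x hx hx1
    have hnum : HasDerivAt (fun y : ℝ => y ^ k - 1) ((k : ℝ) * x ^ (k - 1)) x :=
      (hasDerivAt_pow k x).sub_const 1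
    have hdenD : HasDerivAt (fun y : ℝ => y ^ (r : ℝ) - 1) (r * x ^ (r - 1)) x :=
      (Real.hasDerivAt_rpow_const (Or.inl hx.ne')).sub_const 1
    have hF : HasDerivAt (fun y : ℝ => -(y ^ k - 1) / (y ^ (r : ℝ) - 1))
        (-(((k : ℝ) * x ^ (k - 1) * (x ^ (r:ℝ) - 1) - (x ^ k - 1) * (r * x ^ (r - 1))) /
          (x ^ (r:ℝ) - 1) ^ 2)) x := by
      have h := (hnum.div hdenD hd).neg
      have heq : (fun y : ℝ => -(y ^ k - 1) / (y ^ (r:ℝ) - 1))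
          = fun y : ℝ => -((y ^ k - 1) / (y ^ (r:ℝ) - 1)) := by
        funext y; rw [neg_div]
      rw [heq]; exact h
    have hEq : g =ᶠ[𝓝 x] fun y => -(y ^ k - 1) / (y ^ (r : ℝ) - 1) := by
      filter_upwards [isOpen_ne.mem_nhds hx1] with y hy
      simp [hg, hy]
    have hG : HasDerivAt g
        (-(((k : ℝ) * x ^ (k - 1) * (x ^ (r:ℝ) - 1) - (x ^ k - 1) * (r * x ^ (r - 1))) /
          (x ^ (r:ℝ) - 1) ^ 2)) x := hF.congr_of_eventuallyEq hEq
    rw [hG.deriv]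
    have hkeyr := key_ineq r hr (k : ℝ) ha1 hkr x hx hx1
    have e1 : x ^ k = x ^ ((k : ℝ)) := (Real.rpow_natCast x k).symm
    have e2 : x ^ (k - 1) = x ^ ((k : ℝ) - 1) := by
      rw [← Real.rpow_natCast x (k - 1)]
      congr 1
      push_cast [Nat.cast_sub hk]
      ring
    have hnumneg : (k : ℝ) * x ^ (k - 1) * (x ^ (r:ℝ) - 1) - (x ^ k - 1) * (r * x ^ (r - 1)) < 0 := by
      rw [e1, e2]
      nlinarith [hkeyr]
    have hsq : (0:ℝ) < (x ^ (r:ℝ) - 1) ^ 2 := by positivity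
    have := div_neg_of_neg_of_pos hnumneg hsq
    linarith
  -- strict mono on the two pieces
  have mono1 : StrictMonoOn g (Set.Ioc 0 1) := by
    apply strictMonoOn_of_deriv_pos (convex_Ioc 0 1)
    · intro x hx
      exact (hcont x hx.1).continuousWithinAt
    · intro x hx
      rw [interior_Ioc] at hx
      exact hderiv x hx.1 (ne_of_lt hx.2)
  have mono2 : StrictMonoOn g (Set.Ici 1) := by
    apply strictMonoOn_of_deriv_pos (convex_Ici 1)
    · intro x hx
      exact (hcont x (lt_of_lt_of_le one_pos hx)).continuousWithinAt
    · intro x hx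
      rw [interior_Ici] at hx
      exact hderiv x (lt_trans one_pos hx) (ne_of_gt hx)
  intro x hx y hy hxy
  simp only [Set.mem_Ioi] at hx hy
  rcases le_or_gt y 1 with hy1 | hy1
  · exact mono1 ⟨hx, le_of_lt (lt_of_lt_of_le hxy hy1)⟩ ⟨hy, hy1⟩ hxy
  · rcases le_or_gt 1 x with hx1 | hx1
    · exact mono2 hx1 (le_of_lt hy1) hxy
    · calc g x < g 1 := mono1 ⟨hx, hx1.le⟩ ⟨one_pos, le_refl 1⟩ hx1
        _ < g y := mono2 (le_refl (1:ℝ)) hy1.le hy1
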